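/- There is no unitary operator U on ℂ² ⊗ ℂ² such that for every unit vector φ ∈ ℂ², U(φ ⊗ e₀) = φ ⊗ φ, where e₀ = (1,0) is the first standard basis vector of ℂ² (the qubit state |0⟩). -/
import Mathlib

noncomputable def e0 : EuclideanSpace ℂ (Fin 2) := EuclideanSpace.single 0 1

noncomputable def tmul2 (x y : EuclideanSpace ℂ (Fin 2)) :
    EuclideanSpace ℂ (Fin 2 × Fin 2) :=
  (WithLp.equiv 2 _).symm fun p => x p.1 * y p.2

noncomputable def e1' : EuclideanSpace ℂ (Fin 2) := EuclideanSpace.single 1 1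

lemma tmul2_apply (x y : EuclideanSpace ℂ (Fin 2)) (p : Fin 2 × Fin 2) :
    tmul2 x y p = x p.1 * y p.2 := rfl

lemma e0_apply (i : Fin 2) : e0 i = if i = 0 then 1 else 0 := by
  simp [e0, EuclideanSpace.single_apply]

lemma e1'_apply (i : Fin 2) : e1' i = if i = 1 then 1 else 0 := by
  simp [e1', EuclideanSpace.single_apply]

lemma norm_e0 : ‖e0‖ = 1 := by simp [e0]
lemma norm_e1' : ‖e1'‖ = 1 := by simp [e1']

theorem no_cloning_1WQC_qubit :
    ¬ ∃ U : EuclideanSpace ℂ (Fin 2 × Fin 2) ≃ₗᵢ[ℂ] EuclideanSpace ℂ (Fin 2 × Fin 2),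
      ∀ φ : EuclideanSpace ℂ (Fin 2), ‖φ‖ = 1 → U (tmul2 φ e0) = tmul2 φ φ := by
  rintro ⟨U, hU⟩
  set c : ℂ := (Real.sqrt 2 : ℂ)⁻¹ with hc
  have hc0 : c ≠ 0 := by
    simp [hc]
  set χ : EuclideanSpace ℂ (Fin 2) := c • (e0 + e1') with hχdef
  have hχ : ‖χ‖ = 1 := by
    have h1 : ‖e0 + e1'‖ = Real.sqrt 2 := by
      rw [EuclideanSpace.norm_eq]
      congr 1
      rw [Fin.sum_univ_two]
      simp [e0_apply, e1'_apply]
      norm_num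
    rw [hχdef, norm_smul, h1]
    have h2 : (0:ℝ) < Real.sqrt 2 := by positivity
    rw [hc]
    rw [norm_inv]
    simp [Complex.norm_real, abs_of_pos h2]
  have hsplit : tmul2 χ e0 = c • (tmul2 e0 e0 + tmul2 e1' e0) := by
    ext p
    simp [tmul2_apply, hχdef, e0_apply, e1'_apply]
    split_ifs <;> ring
  have key : tmul2 χ χ = c • (tmul2 e0 e0 + tmul2 e1' e1') := by
    rw [← hU χ hχ, hsplit, map_smul, map_add, hU e0 norm_e0, hU e1' norm_e1']
  have := congrFun (congrArg (fun v => (WithLp.equiv 2 _) v) key) (0, 1)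
  simp [tmul2_apply, hχdef, e0_apply, e1'_apply] at this
  exact hc0 this
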